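/- Let p, q, r be odd integers and s an even integer with p·r + q·s = 1, and let γ : ℝ. Note that (p + s + q − r − 1)/2 and (s − r − 1)/2 are integers. Set M := (−1)^{(p+s+q−r−1)/2} · i and N := (−1)^{(s−r−1)/2} · e^{γk} · i. Then M^{s+p} · N^{q−r} = i and N^{−r} · M^{s} = e^{γk} · i. (This is the explicit binary dihedral cross section s : I → V_{p,q,r,s} of the restriction of the torus-knot tangle character variety to the pillowcase, in the case p, q, r odd and s even; its image in the pillowcase is a straight line segment.) -/

import Mathlib

open Quaternion

noncomputable section

/-- The quaternion `i`. -/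
def qi : ℍ[ℝ] := ⟨0, 1, 0, 0⟩

/-- The quaternion `k`. -/
def qk : ℍ[ℝ] := ⟨0, 0, 0, 1⟩

/-- The quaternionic exponential `e^{tQ} = cos t + (sin t) • Q` for a pure unit
quaternion `Q`. -/
def expQ (t : ℝ) (Q : ℍ[ℝ]) : ℍ[ℝ] := ((Real.cos t : ℝ) : ℍ[ℝ]) + (Real.sin t) • Q

/-- Real sign `(-1)^e`. -/
private def sgn (e : ℤ) : ℝ := (-1 : ℝ) ^ e

private lemma sgn_mul (a b : ℤ) : sgn a * sgn b = sgn (a + b) := by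
  unfold sgn; rw [zpow_add₀ (by norm_num : (-1:ℝ) ≠ 0)]

private lemma sgn_even {e : ℤ} (he : Even e) : sgn e = 1 := by
  obtain ⟨k, rfl⟩ := he
  unfold sgn
  rw [← two_mul, zpow_mul]
  norm_num

/-- Real coes are central: pull scalars out of a product. -/
private lemma cmul (x y : ℝ) (a b : ℍ[ℝ]) :
    ((x : ℍ[ℝ]) * a) * ((y : ℍ[ℝ]) * b) = ((x * y : ℝ) : ℍ[ℝ]) * (a * b) := by
  rw [Quaternion.coe_mul]
  calc (x : ℍ[ℝ]) * a * ((y:ℍ[ℝ]) * b) = (x:ℍ[ℝ]) * (a * (y:ℍ[ℝ]) * b) := by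
        rw [mul_assoc, mul_assoc]
    _ = (x:ℍ[ℝ]) * ((y:ℍ[ℝ]) * a * b) := by rw [← Quaternion.coe_commutes]
    _ = (x:ℍ[ℝ]) * (y:ℍ[ℝ]) * (a * b) := by rw [mul_assoc, mul_assoc]

private lemma neg_one_zpow_coe (e : ℤ) :
    ((-1 : ℍ[ℝ])) ^ e = ((sgn e : ℝ) : ℍ[ℝ]) := by
  unfold sgn; push_cast; ring

private lemma zpow_even_of_sq {a : ℍ[ℝ]} (ha : a * a = -1) (m : ℤ) :
    a ^ (2 * m) = ((sgn m : ℝ) : ℍ[ℝ]) := by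
  have ha0 : a ≠ 0 := by
    intro h
    rw [h, mul_zero] at ha
    exact absurd ha (by norm_num)
  rw [zpow_mul, (by rw [zpow_two, ha] : a ^ (2:ℤ) = -1), neg_one_zpow_coe]

private lemma zpow_odd_of_sq {a : ℍ[ℝ]} (ha : a * a = -1) (m : ℤ) :
    a ^ (2 * m + 1) = ((sgn m : ℝ) : ℍ[ℝ]) * a := by
  have ha0 : a ≠ 0 := by
    intro h
    rw [h, mul_zero] at ha
    exact absurd ha (by norm_num)
  rw [zpow_add₀ ha0, zpow_one, zpow_even_of_sq ha]

/-- The explicit binary dihedral cross section of `V_{p,q,r,s} → I` in the case `p, q, r`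
odd and `s` even: with `M = (−1)^{(p+s+q−r−1)/2} i` and `N = (−1)^{(s−r−1)/2} e^{γk} i`
one has `M^{s+p}N^{q−r} = i` and `N^{−r}M^{s} = e^{γk}i`. -/
theorem binary_dihedral_cross_section
    (p q r s : ℤ) (hp : Odd p) (hq : Odd q) (hr : Odd r) (hs : Even s)
    (hpqrs : p * r + q * s = 1)
    (e₁ e₂ : ℤ) (he₁ : 2 * e₁ = p + s + q - r - 1) (he₂ : 2 * e₂ = s - r - 1)
    (γ : ℝ) (M N : ℍ[ℝ])
    (hM : M = (-1 : ℍ[ℝ]) ^ e₁ * qi)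
    (hN : N = (-1 : ℍ[ℝ]) ^ e₂ * (expQ γ qk * qi)) :
    M ^ (s + p) * N ^ (q - r) = qi ∧ N ^ (-r) * M ^ s = expQ γ qk * qi := by
  set c : ℍ[ℝ] := expQ γ qk * qi with hc
  rw [neg_one_zpow_coe] at hM hN
  have hiq : qi * qi = -1 := by ext <;> simp [Quaternion.re_mul, Quaternion.imI_mul, Quaternion.imJ_mul, Quaternion.imK_mul] <;> simp [qi]
  have hcc : c * c = -1 := by
    ext <;> simp [hc, expQ, Quaternion.re_mul, Quaternion.imI_mul, Quaternion.imJ_mul, Quaternion.imK_mul] <;> simp [qi, qk] <;> nlinarith [Real.sin_sq_add_cos_sq γ]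
  have hMM : M * M = -1 := by
    rw [hM, cmul, hiq, sgn_mul, sgn_even ⟨e₁, rfl⟩, Quaternion.coe_one, one_mul]
  have hNN : N * N = -1 := by
    rw [hN, cmul, hcc, sgn_mul, sgn_even ⟨e₂, rfl⟩, Quaternion.coe_one, one_mul]
  obtain ⟨a, ha⟩ := hp
  obtain ⟨b, hb⟩ := hq
  obtain ⟨d, hd⟩ := hr
  obtain ⟨f, hf⟩ := hs
  constructor
  · -- M^(s+p) * N^(q-r) = qi
    obtain ⟨m₁, hm₁⟩ : ∃ m₁, s + p = 2 * m₁ + 1 := ⟨f + a, by omega⟩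
    obtain ⟨m₂, hm₂⟩ : ∃ m₂, q - r = 2 * m₂ := ⟨b - d, by omega⟩
    rw [hm₁, hm₂, zpow_odd_of_sq hMM, zpow_even_of_sq hNN, hM,
      ← mul_assoc, ← Quaternion.coe_mul, ← Quaternion.coe_commutes]
    rw [sgn_mul, ← mul_assoc, ← Quaternion.coe_mul, sgn_mul,
      sgn_even (by rw [Int.even_iff]; omega : Even (m₂ + (m₁ + e₁))), Quaternion.coe_one, one_mul]
  · -- N^(-r) * M^s = c
    obtain ⟨m₃, hm₃⟩ : ∃ m₃, -r = 2 * m₃ + 1 := ⟨-d - 1, by omega⟩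
    obtain ⟨m₄, hm₄⟩ : ∃ m₄, s = 2 * m₄ := ⟨f, by omega⟩
    rw [hm₃, hm₄, zpow_odd_of_sq hNN, zpow_even_of_sq hMM, hN,
      ← mul_assoc, ← Quaternion.coe_mul, ← Quaternion.coe_commutes]
    rw [sgn_mul, ← mul_assoc, ← Quaternion.coe_mul, sgn_mul,
      sgn_even (by rw [Int.even_iff]; omega : Even (m₄ + (m₃ + e₂))), Quaternion.coe_one, one_mul]
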